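/- As ℏ → 0, the rescaled Moyal-type kernel (2π/ℏ) sin(πℏ(x·y'−y·x')) converges pointwise to 2π²(x·y'−y·x'); consequently the ℏ → 0 limit of the p-mechanical bracket formula yields the Poisson bracket: the Fourier transform of ⟦k',k⟧ at ℏ=0 equals ∂_q k̂' ∂_p k̂ − ∂_p k̂' ∂_q k̂ (up to the paper's normalization). -/

import Mathlib

noncomputable section

open Real MeasureTheory Topology Filter

abbrev Hpt (n : ℕ) : Type := ℝ × (Fin n → ℝ) × (Fin n → ℝ)

/-- Phase space `ℝ²ⁿ` with coordinates `(q,p)`. -/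
abbrev PS (n : ℕ) : Type := (Fin n → ℝ) × (Fin n → ℝ)

def dot {n : ℕ} (x y : Fin n → ℝ) : ℝ := ∑ i, x i * y i

/-- Partial Fourier transform `s → ℏ`. -/
def pFT {n : ℕ} (k : Hpt n → ℂ) (h : ℝ) (x y : Fin n → ℝ) : ℂ :=
  ∫ s : ℝ, k (s, x, y) * Complex.exp (-2 * (π : ℂ) * Complex.I * ((h * s : ℝ) : ℂ))

/-- The `ℏ = 0` value of the `p`-mechanical bracket `⟦k',k⟧ˆ_s`, obtained by
replacing the kernel `(2π/ℏ) sin(πℏ(x·y'−y·x'))` by its pointwise limit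
`2π²(x·y'−y·x')` as `ℏ → 0`. -/
def bracketZero {n : ℕ} (k' k : Hpt n → ℂ) (x y : Fin n → ℝ) : ℂ :=
  ∫ w : PS n,
    ((2 * π ^ 2 * (dot x w.2 - dot y w.1) : ℝ) : ℂ) *
      pFT k' 0 w.1 w.2 * pFT k 0 (x - w.1) (y - w.2)

/-- The full Fourier transform of `k` in `(x,y)` (at `ℏ = 0`), evaluated at `(q,p)`. -/
def Khat {n : ℕ} (k : Hpt n → ℂ) (qp : PS n) : ℂ :=
  ∫ g : Hpt n,
    k g * Complex.exp (-2 * (π : ℂ) * Complex.I *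
      ((dot qp.1 g.2.1 + dot qp.2 g.2.2 : ℝ) : ℂ))

def Dq {n : ℕ} (j : Fin n) (F : PS n → ℂ) (qp : PS n) : ℂ :=
  fderiv ℝ F qp (Pi.single j 1, 0)

def Dp {n : ℕ} (j : Fin n) (F : PS n → ℂ) (qp : PS n) : ℂ :=
  fderiv ℝ F qp (0, Pi.single j 1)

namespace BL

variable {n : ℕ}

lemma dot_comm (x y : Fin n → ℝ) : dot x y = dot y x := by
  simp [dot, mul_comm]

lemma dot_single (a : Fin n → ℝ) (j : Fin n) : dot a (Pi.single j 1) = a j := by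
  simp [dot, Pi.single_apply, mul_ite, Finset.sum_ite_eq']

lemma dot_zero (a : Fin n → ℝ) : dot a 0 = 0 := by simp [dot]

lemma abs_dot_le (a b : Fin n → ℝ) : |dot a b| ≤ n * (‖a‖ * ‖b‖) := by
  refine (Finset.abs_sum_le_sum_abs _ _).trans ?_
  have : ∀ i ∈ Finset.univ, |a i * b i| ≤ ‖a‖ * ‖b‖ := by
    intro i _
    rw [abs_mul]
    exact mul_le_mul (norm_le_pi_norm a i) (norm_le_pi_norm b i) (abs_nonneg _) (norm_nonneg _)
  refine (Finset.sum_le_sum this).trans ?_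
  simp [Finset.sum_const]

lemma continuous_dot : Continuous (fun p : (Fin n → ℝ) × (Fin n → ℝ) => dot p.1 p.2) := by
  unfold dot
  fun_prop

/-- The character `e^{-2πi(q·x+p·y)}`. -/
def ch (qp v : PS n) : ℂ :=
  Complex.exp (-2 * (π : ℂ) * Complex.I * ((dot qp.1 v.1 + dot qp.2 v.2 : ℝ) : ℂ))

lemma norm_ch (qp v : PS n) : ‖ch qp v‖ = 1 := by
  rw [ch, Complex.norm_exp]
  have : (-2 * (π : ℂ) * Complex.I * ((dot qp.1 v.1 + dot qp.2 v.2 : ℝ) : ℂ)).re = 0 := by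
    simp [Complex.mul_re, Complex.mul_im]
  rw [this, Real.exp_zero]

lemma continuous_ch (qp : PS n) : Continuous (ch qp) := by
  apply Complex.continuous_exp.comp
  apply continuous_const.mul
  apply Complex.continuous_ofReal.comp
  exact ((continuous_dot.comp (continuous_const.prodMk continuous_fst))).add
    ((continuous_dot.comp (continuous_const.prodMk continuous_snd)))

lemma ch_add (qp u w : PS n) : ch qp (u + w) = ch qp u * ch qp w := by
  rw [ch, ch, ch, ← Complex.exp_add]
  congr 1
  have h1 : dot qp.1 (u + w).1 = dot qp.1 u.1 + dot qp.1 w.1 := by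
    simp [dot, Finset.sum_add_distrib, mul_add]
  have h2 : dot qp.2 (u + w).2 = dot qp.2 u.2 + dot qp.2 w.2 := by
    simp [dot, Finset.sum_add_distrib, mul_add]
  rw [Prod.fst_add, Prod.snd_add] at *
  push_cast [h1, h2]
  ring

/-- `pFT` at `ℏ = 0`. -/
def G0 (k : Hpt n → ℂ) (v : PS n) : ℂ := ∫ s : ℝ, k (s, v.1, v.2)

lemma pFT_zero (k : Hpt n → ℂ) (x y : Fin n → ℝ) : pFT k 0 x y = G0 k (x, y) := by
  simp [pFT, G0]

lemma g0_stronglyMeasurable (k : SchwartzMap (Hpt n) ℂ) :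
    StronglyMeasurable (G0 ⇑k) := by
  have h : StronglyMeasurable (⇑k : ℝ × PS n → ℂ) := k.continuous.stronglyMeasurable
  exact h.integral_prod_left'

lemma integrable_inv_one_add_sq :
    Integrable (fun s : ℝ => ((1 + ‖s‖) ^ (2:ℕ))⁻¹) := by
  have h := integrable_one_add_norm (E := ℝ) (μ := volume) (r := 2) (by norm_num)
  refine h.congr (Filter.Eventually.of_forall (fun s => ?_))
  have h1 : (0:ℝ) < 1 + ‖s‖ := by positivity
  simp only []
  rw [show ((-2:ℝ)) = -(2:ℝ) by norm_num, Real.rpow_neg h1.le,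
    show ((2:ℝ)) = ((2:ℕ):ℝ) by norm_num, Real.rpow_natCast]

lemma g0_decay (k : SchwartzMap (Hpt n) ℂ) (M : ℕ) :
    ∃ C : ℝ, 0 ≤ C ∧ ∀ v : PS n, ‖G0 ⇑k v‖ ≤ C * ((1 + ‖v‖) ^ M)⁻¹ := by
  obtain ⟨C₀, hC₀nn, hbound⟩ :
      ∃ C₀ : ℝ, 0 ≤ C₀ ∧ ∀ g : Hpt n, (1 + ‖g‖) ^ (M + 2) * ‖k g‖ ≤ C₀ := by
    refine ⟨2 ^ (M+2) * (Finset.Iic (M+2, 0)).sup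
      (fun m => SchwartzMap.seminorm ℝ m.1 m.2) k, ?_, ?_⟩
    · positivity
    · intro g
      simpa [norm_iteratedFDeriv_zero] using
        SchwartzMap.one_add_le_sup_seminorm_apply (𝕜 := ℝ) (m := (M+2, 0))
          le_rfl le_rfl k g
  set I₂ : ℝ := ∫ s : ℝ, ((1 + ‖s‖) ^ (2:ℕ))⁻¹ with hI₂
  have hI₂nn : 0 ≤ I₂ := integral_nonneg (fun s => by positivity)
  refine ⟨C₀ * I₂, by positivity, fun v => ?_⟩
  have hpt : ∀ s : ℝ, ‖k (s, v.1, v.2)‖ ≤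
      (C₀ * ((1 + ‖v‖) ^ M)⁻¹) * ((1 + ‖s‖) ^ (2:ℕ))⁻¹ := by
    intro s
    have hkey : (1 + ‖s‖) ^ (2:ℕ) * (1 + ‖v‖) ^ M ≤ (1 + ‖(s, v.1, v.2)‖) ^ (M + 2) := by
      have hs : ‖s‖ ≤ ‖(s, v.1, v.2)‖ := norm_fst_le ((s, v.1, v.2) : Hpt n)
      have hv : ‖v‖ ≤ ‖(s, v.1, v.2)‖ := norm_snd_le (s, v.1, v.2)
      calc (1 + ‖s‖) ^ (2:ℕ) * (1 + ‖v‖) ^ M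
          ≤ (1 + ‖(s, v.1, v.2)‖) ^ (2:ℕ) * (1 + ‖(s, v.1, v.2)‖) ^ M := by
            apply mul_le_mul (pow_le_pow_left₀ (by positivity) (by linarith) _)
              (pow_le_pow_left₀ (by positivity) (by linarith) _) (by positivity) (by positivity)
        _ = (1 + ‖(s, v.1, v.2)‖) ^ (M + 2) := by rw [← pow_add]; ring_nf
    have h1 := hbound (s, v.1, v.2)
    have h2 : (1 + ‖s‖) ^ (2:ℕ) * (1 + ‖v‖) ^ M * ‖k (s, v.1, v.2)‖ ≤ C₀ :=
      le_trans (mul_le_mul_of_nonneg_right hkey (norm_nonneg _)) h1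
    have hp : (0:ℝ) < (1 + ‖s‖) ^ (2:ℕ) * (1 + ‖v‖) ^ M := by positivity
    rw [mul_comm, ← le_div_iff₀ hp] at h2
    calc ‖k (s, v.1, v.2)‖ ≤ C₀ / ((1 + ‖s‖) ^ (2:ℕ) * (1 + ‖v‖) ^ M) := h2
      _ = (C₀ * ((1 + ‖v‖) ^ M)⁻¹) * ((1 + ‖s‖) ^ (2:ℕ))⁻¹ := by
          rw [div_eq_mul_inv, mul_inv]; ring
  calc ‖G0 ⇑k v‖ ≤ ∫ s : ℝ, ‖k (s, v.1, v.2)‖ := norm_integral_le_integral_norm _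
    _ ≤ ∫ s : ℝ, (C₀ * ((1 + ‖v‖) ^ M)⁻¹) * ((1 + ‖s‖) ^ (2:ℕ))⁻¹ := by
        apply integral_mono_of_nonneg (ae_of_all _ fun s => norm_nonneg _)
          (integrable_inv_one_add_sq.const_mul _) (ae_of_all _ hpt)
    _ = (C₀ * ((1 + ‖v‖) ^ M)⁻¹) * I₂ := MeasureTheory.integral_const_mul _ _
    _ = C₀ * I₂ * ((1 + ‖v‖) ^ M)⁻¹ := by ring

instance haarPS : (volume : Measure (PS n)).IsAddHaarMeasure := by
  have h : ((volume : Measure (Fin n → ℝ)).prod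
      (volume : Measure (Fin n → ℝ))).IsAddHaarMeasure :=
      MeasureTheory.Measure.prod.instIsAddHaarMeasure _ _
  rwa [← MeasureTheory.Measure.volume_eq_prod] at h

lemma integrable_decay_PS :
    Integrable (fun v : PS n => ((1 + ‖v‖) ^ (2*n+1))⁻¹) := by
  have h := integrable_one_add_norm (E := PS n) (μ := volume) (r := 2*n+1)
    (by simp [Module.finrank_prod, Module.finrank_pi]; linarith [Nat.cast_nonneg (α := ℝ) n])
  refine h.congr (Filter.Eventually.of_forall (fun v => ?_))
  have h1 : (0:ℝ) < 1 + ‖v‖ := by positivity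
  simp only []
  rw [show -(2*(n:ℝ)+1) = -(((2*n+1:ℕ)):ℝ) by push_cast; ring, Real.rpow_neg h1.le,
    Real.rpow_natCast]

lemma g0_integrable (k : SchwartzMap (Hpt n) ℂ) : Integrable (G0 ⇑k) := by
  obtain ⟨C, hC, hb⟩ := g0_decay k (2*n+1)
  exact (integrable_decay_PS.const_mul C).mono'
    (g0_stronglyMeasurable k).aestronglyMeasurable
    (Filter.Eventually.of_forall (fun v => hb v))

lemma g0_norm_mul_integrable (k : SchwartzMap (Hpt n) ℂ) :
    Integrable (fun v : PS n => ‖v‖ * ‖G0 ⇑k v‖) := by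
  obtain ⟨C, hC, hb⟩ := g0_decay k (2*n+2)
  refine (integrable_decay_PS.const_mul C).mono'
    (continuous_norm.aestronglyMeasurable.mul
      (g0_stronglyMeasurable k).norm.aestronglyMeasurable)
    (Filter.Eventually.of_forall (fun v => ?_))
  have h1 : (0:ℝ) < 1 + ‖v‖ := by positivity
  have : ‖v‖ * ‖G0 ⇑k v‖ ≤ (1 + ‖v‖) * (C * ((1 + ‖v‖) ^ (2*n+2))⁻¹) := by
    apply mul_le_mul (by linarith) (hb v) (norm_nonneg _) (by linarith)
  rw [norm_mul, norm_norm, norm_norm]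
  refine this.trans (le_of_eq ?_)
  rw [show 2*n+2 = (2*n+1) + 1 by ring, pow_succ]
  field_simp

end BL
namespace BL
open scoped FourierTransform
variable {n : ℕ}

lemma dot_add_left (a b c : Fin n → ℝ) : dot (a + b) c = dot a c + dot b c := by
  simp [dot, add_mul, Finset.sum_add_distrib]

lemma dot_smul_left (r : ℝ) (a b : Fin n → ℝ) : dot (r • a) b = r * dot a b := by
  simp [dot, Finset.mul_sum, mul_assoc]

lemma dot_add_right (a b c : Fin n → ℝ) : dot a (b + c) = dot a b + dot a c := by
  rw [dot_comm, dot_add_left, dot_comm b a, dot_comm c a]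

lemma dot_smul_right (r : ℝ) (a b : Fin n → ℝ) : dot a (r • b) = r * dot a b := by
  rw [dot_comm, dot_smul_left, dot_comm]

/-- The pairing `(q,p)·(x,y) = q·x + p·y` as a continuous bilinear form. -/
def bil : PS n →L[ℝ] PS n →L[ℝ] ℝ :=
  LinearMap.mkContinuous₂
    (LinearMap.mk₂ ℝ (fun v w : PS n => dot v.1 w.1 + dot v.2 w.2)
      (fun m₁ m₂ w => by
        simp only [Prod.fst_add, Prod.snd_add, dot_add_left]; ring)
      (fun c m w => by
        simp only [Prod.smul_fst, Prod.smul_snd, dot_smul_left, smul_eq_mul]; ring)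
      (fun m w₁ w₂ => by
        simp only [Prod.fst_add, Prod.snd_add, dot_add_right]; ring)
      (fun c m w => by
        simp only [Prod.smul_fst, Prod.smul_snd, dot_smul_right, smul_eq_mul]; ring))
    (n * 2)
    (fun v w => by
      have h1 := abs_dot_le v.1 w.1
      have h2 := abs_dot_le v.2 w.2
      have hv1 : ‖v.1‖ ≤ ‖v‖ := norm_fst_le v
      have hv2 : ‖v.2‖ ≤ ‖v‖ := norm_snd_le v
      have hw1 : ‖w.1‖ ≤ ‖w‖ := norm_fst_le w
      have hw2 : ‖w.2‖ ≤ ‖w‖ := norm_snd_le w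
      simp only [LinearMap.mk₂_apply, Real.norm_eq_abs]
      have := abs_add_le (dot v.1 w.1) (dot v.2 w.2)
      have hn : (0:ℝ) ≤ n := Nat.cast_nonneg n
      have b1 : |dot v.1 w.1| ≤ n * (‖v‖ * ‖w‖) := by
        refine h1.trans ?_
        have : ‖v.1‖ * ‖w.1‖ ≤ ‖v‖ * ‖w‖ :=
          mul_le_mul hv1 hw1 (norm_nonneg _) (norm_nonneg _)
        nlinarith
      have b2 : |dot v.2 w.2| ≤ n * (‖v‖ * ‖w‖) := by
        refine h2.trans ?_
        have : ‖v.2‖ * ‖w.2‖ ≤ ‖v‖ * ‖w‖ :=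
          mul_le_mul hv2 hw2 (norm_nonneg _) (norm_nonneg _)
        nlinarith
      calc |dot v.1 w.1 + dot v.2 w.2| ≤ |dot v.1 w.1| + |dot v.2 w.2| := abs_add_le _ _
        _ ≤ n * (‖v‖ * ‖w‖) + n * (‖v‖ * ‖w‖) := add_le_add b1 b2
        _ = (n * 2 : ℝ) * ‖v‖ * ‖w‖ := by ring)

lemma bil_apply (v w : PS n) : bil v w = dot v.1 w.1 + dot v.2 w.2 := rfl

instance haarHpt : (volume : Measure (Hpt n)).IsAddHaarMeasure := by
  have h : ((volume : Measure ℝ).prod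
      (volume : Measure (PS n))).IsAddHaarMeasure := inferInstance
  rwa [← MeasureTheory.Measure.volume_eq_prod] at h

lemma smul_eq_char_mul (r : ℝ) (z : ℂ) :
    (𝐞 r : Circle) • z = Complex.exp ((2 * π * r : ℝ) * Complex.I) * z := by
  rw [Circle.smul_def, Real.fourierChar_apply, smul_eq_mul]

lemma khat_eq (k : SchwartzMap (Hpt n) ℂ) (qp : PS n) :
    Khat ⇑k qp = VectorFourier.fourierIntegral 𝐞 volume
      (bil (n := n)).toLinearMap₁₂ (G0 ⇑k) qp := by
  have hint : Integrable (fun g : Hpt n => k g * ch qp g.2) := by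
    refine k.integrable.norm.mono' ?_ (Filter.Eventually.of_forall (fun g => ?_))
    · exact (k.continuous.mul ((continuous_ch qp).comp continuous_snd)).aestronglyMeasurable
    · rw [norm_mul, norm_ch, mul_one]
  have step1 : Khat ⇑k qp = ∫ v : PS n, G0 ⇑k v * ch qp v := by
    rw [Khat]
    have : (fun g : Hpt n => k g * Complex.exp (-2 * (π : ℂ) * Complex.I *
        ((dot qp.1 g.2.1 + dot qp.2 g.2.2 : ℝ) : ℂ))) = fun g : Hpt n => k g * ch qp g.2 := rfl
    rw [this]
    rw [MeasureTheory.Measure.volume_eq_prod] at hint ⊢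
    rw [MeasureTheory.integral_prod_symm _ hint]
    congr 1
    funext v
    dsimp only
    rw [MeasureTheory.integral_mul_const]
    rfl
  rw [step1, VectorFourier.fourierIntegral]
  congr 1
  funext v
  rw [smul_eq_char_mul]
  rw [show (bil (n := n)).toLinearMap₁₂ v qp = dot qp.1 v.1 + dot qp.2 v.2 by
    rw [ContinuousLinearMap.toLinearMap₁₂_apply_apply_apply, bil_apply, dot_comm v.1 qp.1,
      dot_comm v.2 qp.2]]
  rw [ch, mul_comm]
  congr 1
  push_cast
  ring
end BL

namespace BL
open scoped FourierTransform
open VectorFourier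
variable {n : ℕ}

lemma integrable_char_smulRight (k : SchwartzMap (Hpt n) ℂ) (qp : PS n) :
    Integrable (fun v : PS n => (𝐞 (-((bil (n := n)).toLinearMap₁₂ v qp)) : Circle) •
      fourierSMulRight (bil (n := n)) (G0 ⇑k) v) := by
  refine ((g0_norm_mul_integrable k).const_mul (2 * π * ‖(bil (n := n))‖)).mono'
    ?_ (Filter.Eventually.of_forall (fun v => ?_))
  · refine AEStronglyMeasurable.smul ?_
      (g0_stronglyMeasurable k).aestronglyMeasurable.fourierSMulRight
    refine Continuous.aestronglyMeasurable ?_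
    exact continuous_subtype_val.comp
      (Real.continuous_fourierChar.comp (((bil (n := n)).flip qp).continuous).neg)
  · rw [Circle.norm_smul _ (fourierSMulRight (bil (n := n)) (G0 ⇑k) v)]
    calc ‖fourierSMulRight (bil (n := n)) (G0 ⇑k) v‖
        ≤ 2 * π * ‖(bil (n := n))‖ * ‖v‖ * ‖G0 ⇑k v‖ := norm_fourierSMulRight_le _ _ _
      _ = 2 * π * ‖(bil (n := n))‖ * (‖v‖ * ‖G0 ⇑k v‖) := by ring

lemma fourier_deriv (k : SchwartzMap (Hpt n) ℂ) (qp d : PS n) :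
    fderiv ℝ (Khat ⇑k) qp d =
      ∫ v : PS n, (-(2 * π * Complex.I) * ((bil (n := n) v d : ℝ) : ℂ)) *
        (G0 ⇑k v * ch qp v) := by
  have heq : Khat ⇑k = VectorFourier.fourierIntegral 𝐞 volume
      (bil (n := n)).toLinearMap₁₂ (G0 ⇑k) := funext (khat_eq k)
  rw [heq, VectorFourier.fderiv_fourierIntegral (bil (n := n))
    (g0_integrable k) (g0_norm_mul_integrable k)]
  rw [VectorFourier.fourierIntegral]
  rw [ContinuousLinearMap.integral_apply (integrable_char_smulRight k qp)]
  congr 1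
  funext v
  rw [Circle.smul_def, ContinuousLinearMap.smul_apply, fourierSMulRight_apply, ← Circle.smul_def]
  rw [Circle.smul_def, Real.fourierChar_apply]
  rw [show ((bil (n := n)).toLinearMap₁₂ v qp) = dot qp.1 v.1 + dot qp.2 v.2 by
    rw [ContinuousLinearMap.toLinearMap₁₂_apply_apply_apply, bil_apply, dot_comm v.1 qp.1,
      dot_comm v.2 qp.2]]
  rw [ch]
  have : Complex.exp ((2 * π * (-(dot qp.1 v.1 + dot qp.2 v.2)) : ℝ) * Complex.I) =
      Complex.exp (-2 * (π : ℂ) * Complex.I *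
        ((dot qp.1 v.1 + dot qp.2 v.2 : ℝ) : ℂ)) := by
    congr 1
    push_cast
    ring
  rw [this]
  simp only [smul_eq_mul, Complex.real_smul, neg_smul]
  push_cast
  ring

lemma Dq_eq (k : SchwartzMap (Hpt n) ℂ) (j : Fin n) (qp : PS n) :
    Dq j (Khat ⇑k) qp =
      ∫ v : PS n, (-(2 * π * Complex.I) * ((v.1 j : ℝ) : ℂ)) * (G0 ⇑k v * ch qp v) := by
  rw [Dq, fourier_deriv k qp (Pi.single j 1, 0)]
  congr 1
  funext v
  rw [show bil (n := n) v (Pi.single j 1, 0) = v.1 j by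
    rw [bil_apply]
    simp [dot_single, dot_zero]]

lemma Dp_eq (k : SchwartzMap (Hpt n) ℂ) (j : Fin n) (qp : PS n) :
    Dp j (Khat ⇑k) qp =
      ∫ v : PS n, (-(2 * π * Complex.I) * ((v.2 j : ℝ) : ℂ)) * (G0 ⇑k v * ch qp v) := by
  rw [Dp, fourier_deriv k qp (0, Pi.single j 1)]
  congr 1
  funext v
  rw [show bil (n := n) v (0, Pi.single j 1) = v.2 j by
    rw [bil_apply]
    simp [dot_single, dot_zero]]

end BL

namespace BL
open scoped FourierTransform
variable {n : ℕ}

def aF (k : Hpt n → ℂ) (qp : PS n) (j : Fin n) (u : PS n) : ℂ :=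
  ((u.1 j : ℝ) : ℂ) * (G0 k u * ch qp u)

def bF (k : Hpt n → ℂ) (qp : PS n) (j : Fin n) (u : PS n) : ℂ :=
  ((u.2 j : ℝ) : ℂ) * (G0 k u * ch qp u)

lemma integrable_aF (k : SchwartzMap (Hpt n) ℂ) (qp : PS n) (j : Fin n) :
    Integrable (aF ⇑k qp j) := by
  refine (g0_norm_mul_integrable k).mono' ?_ (Filter.Eventually.of_forall (fun v => ?_))
  · exact ((Complex.continuous_ofReal.comp
      ((continuous_apply j).comp continuous_fst)).aestronglyMeasurable).mul
      (((g0_stronglyMeasurable k).aestronglyMeasurable).mul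
        (continuous_ch qp).aestronglyMeasurable)
  · rw [aF, norm_mul, norm_mul, norm_ch, mul_one, Complex.norm_real, Real.norm_eq_abs]
    apply mul_le_mul_of_nonneg_right _ (norm_nonneg _)
    exact le_trans (norm_le_pi_norm v.1 j) (norm_fst_le v)

lemma integrable_bF (k : SchwartzMap (Hpt n) ℂ) (qp : PS n) (j : Fin n) :
    Integrable (bF ⇑k qp j) := by
  refine (g0_norm_mul_integrable k).mono' ?_ (Filter.Eventually.of_forall (fun v => ?_))
  · exact ((Complex.continuous_ofReal.comp
      ((continuous_apply j).comp continuous_snd)).aestronglyMeasurable).mul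
      (((g0_stronglyMeasurable k).aestronglyMeasurable).mul
        (continuous_ch qp).aestronglyMeasurable)
  · rw [bF, norm_mul, norm_mul, norm_ch, mul_one, Complex.norm_real, Real.norm_eq_abs]
    apply mul_le_mul_of_nonneg_right _ (norm_nonneg _)
    exact le_trans (norm_le_pi_norm v.2 j) (norm_snd_le v)

/-- The shear `(u,w) ↦ (u-w, w)` as a homeomorphism. -/
def shearHomeo : (PS n × PS n) ≃ₜ (PS n × PS n) where
  toFun := fun z => (z.1 - z.2, z.2)
  invFun := fun z => (z.1 + z.2, z.2)
  left_inv := fun z => by simp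
  right_inv := fun z => by simp
  continuous_toFun := (continuous_fst.sub continuous_snd).prodMk continuous_snd
  continuous_invFun := (continuous_fst.add continuous_snd).prodMk continuous_snd

lemma lhs_eq (k' k : SchwartzMap (Hpt n) ℂ) (qp : PS n) :
    (∫ xy : PS n, bracketZero ⇑k' ⇑k xy.1 xy.2 * ch qp xy)
      = ((2 * π ^ 2 : ℝ) : ℂ) * ∑ j : Fin n,
          ((∫ u : PS n, aF ⇑k qp j u) * (∫ w : PS n, bF ⇑k' qp j w)
            - (∫ u : PS n, bF ⇑k qp j u) * (∫ w : PS n, aF ⇑k' qp j w)) := by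
  classical
  set Hf : PS n × PS n → ℂ := fun z => ((2 * π ^ 2 : ℝ) : ℂ) * ∑ j : Fin n,
      (aF ⇑k qp j z.1 * bF ⇑k' qp j z.2 - bF ⇑k qp j z.1 * aF ⇑k' qp j z.2) with hHf
  have hpoint : ∀ xy w : PS n,
      (((2 * π ^ 2 * (dot xy.1 w.2 - dot xy.2 w.1) : ℝ)) : ℂ) *
          G0 ⇑k' w * G0 ⇑k (xy - w) * ch qp xy
        = Hf (xy - w, w) := by
    intro xy w
    have hch : ch qp xy = ch qp (xy - w) * ch qp w := by
      rw [← ch_add]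
      congr 1
      abel
    have hsum : ((dot xy.1 w.2 - dot xy.2 w.1 : ℝ) : ℂ)
        = ∑ j : Fin n, (((xy - w).1 j : ℂ) * ((w.2 j : ℝ) : ℂ)
            - ((xy - w).2 j : ℂ) * ((w.1 j : ℝ) : ℂ)) := by
      have hd : dot xy.1 w.2 - dot xy.2 w.1
          = ∑ j, ((xy - w).1 j * w.2 j - (xy - w).2 j * w.1 j) := by
        simp only [dot, Prod.fst_sub, Prod.snd_sub, Pi.sub_apply,
          ← Finset.sum_sub_distrib]
        apply Finset.sum_congr rfl
        intro j _
        ring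
      rw [hd]
      push_cast
      rfl
    have hterm : ∀ j : Fin n,
        aF ⇑k qp j (xy - w) * bF ⇑k' qp j w - bF ⇑k qp j (xy - w) * aF ⇑k' qp j w
          = ((((xy - w).1 j : ℝ) : ℂ) * ((w.2 j : ℝ) : ℂ)
              - (((xy - w).2 j : ℝ) : ℂ) * ((w.1 j : ℝ) : ℂ))
            * (G0 ⇑k (xy - w) * ch qp (xy - w) * (G0 ⇑k' w * ch qp w)) := by
      intro j
      simp only [aF, bF]
      ring
    rw [hch, hHf]
    simp only
    rw [Finset.sum_congr rfl (fun j _ => hterm j), ← Finset.sum_mul, ← hsum]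
    push_cast
    ring
  have hHint : Integrable Hf ((volume : Measure (PS n)).prod volume) := by
    rw [hHf]
    apply Integrable.const_mul
    apply integrable_finset_sum
    intro j _
    exact ((integrable_aF k qp j).mul_prod (integrable_bF k' qp j)).sub
      ((integrable_bF k qp j).mul_prod (integrable_aF k' qp j))
  have hemb : MeasurableEmbedding (fun z : PS n × PS n => (z.1 - z.2, z.2)) :=
    (shearHomeo (n := n)).measurableEmbedding
  have hshear : MeasurePreserving (fun z : PS n × PS n => (z.1 - z.2, z.2))
      ((volume : Measure (PS n)).prod volume) ((volume : Measure (PS n)).prod volume) :=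
    measurePreserving_sub_prod volume volume
  have step0 : (∫ xy : PS n, bracketZero ⇑k' ⇑k xy.1 xy.2 * ch qp xy)
      = ∫ xy : PS n, ∫ w : PS n,
          (((2 * π ^ 2 * (dot xy.1 w.2 - dot xy.2 w.1) : ℝ)) : ℂ) *
            G0 ⇑k' w * G0 ⇑k (xy - w) * ch qp xy := by
    congr 1
    funext xy
    rw [bracketZero, ← MeasureTheory.integral_mul_const]
    congr 1
    funext w
    rw [pFT_zero, pFT_zero]
    rfl
  have hΦint : Integrable (Function.uncurry (fun xy w : PS n =>
      (((2 * π ^ 2 * (dot xy.1 w.2 - dot xy.2 w.1) : ℝ)) : ℂ) *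
        G0 ⇑k' w * G0 ⇑k (xy - w) * ch qp xy))
      ((volume : Measure (PS n)).prod volume) := by
    have : Function.uncurry (fun xy w : PS n =>
        (((2 * π ^ 2 * (dot xy.1 w.2 - dot xy.2 w.1) : ℝ)) : ℂ) *
          G0 ⇑k' w * G0 ⇑k (xy - w) * ch qp xy)
        = Hf ∘ (fun z : PS n × PS n => (z.1 - z.2, z.2)) := by
      funext z
      exact hpoint z.1 z.2
    rw [this]
    rw [hshear.integrable_comp_emb hemb]
    exact hHint
  rw [step0, MeasureTheory.integral_integral hΦint]
  have : (∫ z : PS n × PS n,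
      (((2 * π ^ 2 * (dot z.1.1 z.2.2 - dot z.1.2 z.2.1) : ℝ)) : ℂ) *
        G0 ⇑k' z.2 * G0 ⇑k (z.1 - z.2) * ch qp z.1
        ∂((volume : Measure (PS n)).prod volume))
      = ∫ z : PS n × PS n, Hf ((fun z : PS n × PS n => (z.1 - z.2, z.2)) z)
        ∂((volume : Measure (PS n)).prod volume) := by
    congr 1
    funext z
    exact hpoint z.1 z.2
  rw [this, hshear.integral_comp hemb Hf, hHf]
  simp only
  rw [MeasureTheory.integral_const_mul]
  congr 1
  rw [MeasureTheory.integral_finset_sum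
    (f := fun (j : Fin n) (z : PS n × PS n) =>
      aF ⇑k qp j z.1 * bF ⇑k' qp j z.2 - bF ⇑k qp j z.1 * aF ⇑k' qp j z.2)
    Finset.univ (fun j _ =>
    ((integrable_aF k qp j).mul_prod (integrable_bF k' qp j)).sub
      ((integrable_bF k qp j).mul_prod (integrable_aF k' qp j)))]
  apply Finset.sum_congr rfl
  intro j _
  rw [integral_sub ((integrable_aF k qp j).mul_prod (integrable_bF k' qp j))
    ((integrable_bF k qp j).mul_prod (integrable_aF k' qp j)),
    MeasureTheory.integral_prod_mul, MeasureTheory.integral_prod_mul]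

end BL

namespace BL
variable {n : ℕ}

lemma sin_limit (a : ℝ) :
    Tendsto (fun h : ℝ => (2 * π / h) * Real.sin (π * h * a))
      (𝓝[≠] 0) (𝓝 (2 * π ^ 2 * a)) := by
  rcases eq_or_ne a 0 with rfl | ha
  · simpa using tendsto_const_nhds (x := (0:ℝ)) (f := 𝓝[≠] (0:ℝ))
  · have hsin : Tendsto (fun x : ℝ => Real.sin x / x) (𝓝[≠] 0) (𝓝 1) := by
      have h := hasDerivAt_iff_tendsto_slope.mp (Real.hasDerivAt_sin 0)
      rw [Real.cos_zero] at h
      refine h.congr (fun x => ?_)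
      simp [slope_def_field]
    have hmap : Tendsto (fun h : ℝ => π * h * a) (𝓝[≠] 0) (𝓝[≠] 0) := by
      rw [tendsto_nhdsWithin_iff]
      constructor
      · have : Continuous (fun h : ℝ => π * h * a) := by continuity
        simpa using this.tendsto' 0 0 (by ring) |>.mono_left nhdsWithin_le_nhds
      · filter_upwards [self_mem_nhdsWithin] with x hx
        simp only [Set.mem_compl_iff, Set.mem_singleton_iff] at hx ⊢
        intro hc
        rcases mul_eq_zero.mp hc with hc | hc
        · rcases mul_eq_zero.mp hc with hc | hc
          · exact Real.pi_ne_zero hc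
          · exact hx hc
        · exact ha hc
    have h2 : Tendsto (fun h : ℝ => 2 * π ^ 2 * a * (Real.sin (π * h * a) / (π * h * a)))
        (𝓝[≠] 0) (𝓝 (2 * π ^ 2 * a)) := by
      simpa using (hsin.comp hmap).const_mul (2 * π ^ 2 * a)
    refine Tendsto.congr' ?_ h2
    filter_upwards [self_mem_nhdsWithin] with h hh
    simp only [Set.mem_compl_iff, Set.mem_singleton_iff] at hh
    field_simp

end BL


/-- As `ℏ → 0` the rescaled Moyal kernel `(2π/ℏ) sin(πℏ a)` converges to
`2π² a`, and consequently the `ℏ = 0` limit of the `p`-mechanical bracket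
yields (up to the paper's normalisation, here the constant `1/2`) the Poisson
bracket `∂_q k̂' ∂_p k̂ − ∂_p k̂' ∂_q k̂` of the Fourier transforms. -/
theorem bracket_limit_is_poisson (n : ℕ) (k' k : SchwartzMap (Hpt n) ℂ) :
    (∀ a : ℝ,
      Tendsto (fun h : ℝ => (2 * π / h) * Real.sin (π * h * a))
        (𝓝[≠] 0) (𝓝 (2 * π ^ 2 * a))) ∧
    (∀ qp : PS n,
      (∫ xy : PS n, bracketZero ⇑k' ⇑k xy.1 xy.2 *
          Complex.exp (-2 * (π : ℂ) * Complex.I *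
            ((dot qp.1 xy.1 + dot qp.2 xy.2 : ℝ) : ℂ)))
        = (1 / 2 : ℂ) * ∑ j : Fin n,
            (Dq j (Khat ⇑k') qp * Dp j (Khat ⇑k) qp
              - Dp j (Khat ⇑k') qp * Dq j (Khat ⇑k) qp)) := by
  constructor
  · exact BL.sin_limit
  · intro qp
    have h0 : (∫ xy : PS n, bracketZero ⇑k' ⇑k xy.1 xy.2 *
        Complex.exp (-2 * (π : ℂ) * Complex.I *
          ((dot qp.1 xy.1 + dot qp.2 xy.2 : ℝ) : ℂ)))
        = ∫ xy : PS n, bracketZero ⇑k' ⇑k xy.1 xy.2 * BL.ch qp xy := rfl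
    have hq' : ∀ j : Fin n, Dq j (Khat ⇑k') qp
        = -(2 * π * Complex.I) * ∫ w : PS n, BL.aF ⇑k' qp j w := by
      intro j
      rw [BL.Dq_eq, ← MeasureTheory.integral_const_mul]
      congr 1
      funext v
      rw [BL.aF]
      ring
    have hp' : ∀ j : Fin n, Dp j (Khat ⇑k') qp
        = -(2 * π * Complex.I) * ∫ w : PS n, BL.bF ⇑k' qp j w := by
      intro j
      rw [BL.Dp_eq, ← MeasureTheory.integral_const_mul]
      congr 1
      funext v
      rw [BL.bF]
      ring
    have hq : ∀ j : Fin n, Dq j (Khat ⇑k) qp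
        = -(2 * π * Complex.I) * ∫ w : PS n, BL.aF ⇑k qp j w := by
      intro j
      rw [BL.Dq_eq, ← MeasureTheory.integral_const_mul]
      congr 1
      funext v
      rw [BL.aF]
      ring
    have hp : ∀ j : Fin n, Dp j (Khat ⇑k) qp
        = -(2 * π * Complex.I) * ∫ w : PS n, BL.bF ⇑k qp j w := by
      intro j
      rw [BL.Dp_eq, ← MeasureTheory.integral_const_mul]
      congr 1
      funext v
      rw [BL.bF]
      ring
    rw [h0, BL.lhs_eq k' k qp]
    have hsum : ∑ j : Fin n,
        (Dq j (Khat ⇑k') qp * Dp j (Khat ⇑k) qp - Dp j (Khat ⇑k') qp * Dq j (Khat ⇑k) qp)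
        = ∑ j : Fin n,
          ((-(2 * π * Complex.I) * ∫ w : PS n, BL.aF ⇑k' qp j w) *
              (-(2 * π * Complex.I) * ∫ w : PS n, BL.bF ⇑k qp j w)
            - (-(2 * π * Complex.I) * ∫ w : PS n, BL.bF ⇑k' qp j w) *
              (-(2 * π * Complex.I) * ∫ w : PS n, BL.aF ⇑k qp j w)) :=
      Finset.sum_congr rfl (fun j _ => by rw [hq' j, hp' j, hq j, hp j])
    rw [hsum, Finset.mul_sum, Finset.mul_sum]
    apply Finset.sum_congr rfl
    intro j _
    set P : ℂ := ∫ u : PS n, BL.aF ⇑k qp j u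
    set Q : ℂ := ∫ w : PS n, BL.bF ⇑k' qp j w
    set R : ℂ := ∫ u : PS n, BL.bF ⇑k qp j u
    set S : ℂ := ∫ w : PS n, BL.aF ⇑k' qp j w
    push_cast
    linear_combination (2 * (π:ℂ)^2 * (P * Q - R * S)) * Complex.I_sq
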